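/- Let d ≥ 2, let J and L be finite sets ('joints' and 'lines'), with an incidence relation where each p ∈ J lies on exactly d lines, and suppose there exist nonnegative reals b_{p,ℓ} (defined for incident pairs) such that ∑_{p ∈ ℓ} b_{p,ℓ} = 1 for every ℓ ∈ L, the product ∏_{ℓ ∋ p} b_{p,ℓ} equals a common value W for all p ∈ J, and ∑_{p∈J} ∏_{ℓ∋p} b_{p,ℓ} ≥ 1/d!. Then |J| ≤ ((d-1)!^{1/(d-1)}/d) · |L|^{d/(d-1)}. -/

import Mathlib

open Finset Real

/-- Abstract final argument of the joints theorem: given weights `b` on incident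
(joint, line) pairs with per-line sums equal to 1, a common product value `W` at
each joint, and total product sum at least `1/d!`, the number of joints is at
most `((d-1)!^(1/(d-1)) / d) * |L|^(d/(d-1))`. -/
theorem joints_variational_bound {α β : Type*} (d : ℕ) (hd : 2 ≤ d)
    (J : Finset α) (L : Finset β) (Inc : α → β → Prop) [∀ p ℓ, Decidable (Inc p ℓ)]
    (hreg : ∀ p ∈ J, (L.filter fun ℓ => Inc p ℓ).card = d)
    (b : α → β → ℝ) (W : ℝ)
    (hb : ∀ p ∈ J, ∀ ℓ ∈ L, Inc p ℓ → 0 ≤ b p ℓ)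
    (hline : ∀ ℓ ∈ L, ∑ p ∈ J.filter (fun p => Inc p ℓ), b p ℓ = 1)
    (hW : ∀ p ∈ J, ∏ ℓ ∈ L.filter (fun ℓ => Inc p ℓ), b p ℓ = W)
    (hlow : (1 : ℝ) / d.factorial ≤
      ∑ p ∈ J, ∏ ℓ ∈ L.filter (fun ℓ => Inc p ℓ), b p ℓ) :
    (J.card : ℝ) ≤ (((d - 1).factorial : ℝ) ^ (1 / ((d : ℝ) - 1)) / (d : ℝ)) *
      (L.card : ℝ) ^ ((d : ℝ) / ((d : ℝ) - 1)) := by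
  have hd0 : (0:ℝ) < d := by positivity
  have hd1 : (0:ℝ) < (d:ℝ) - 1 := by
    have : (2:ℝ) ≤ d := by exact_mod_cast hd
    linarith
  rcases J.eq_empty_or_nonempty with rfl | hJne
  · simp only [Finset.card_empty, Nat.cast_zero]
    positivity
  have hN : (0:ℝ) < J.card := by exact_mod_cast Finset.card_pos.mpr hJne
  set N : ℝ := (J.card : ℝ) with hNdef
  set M : ℝ := (L.card : ℝ) with hMdef
  set F : ℝ := (d.factorial : ℝ) with hFdef
  set G : ℝ := ((d-1).factorial : ℝ) with hGdef
  set e : ℝ := 1 / ((d : ℝ) - 1) with hedef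
  have hF : (0:ℝ) < F := by positivity
  have hG : (0:ℝ) < G := by positivity
  have hM0 : (0:ℝ) ≤ M := by positivity
  have he : 0 < e := by rw [hedef]; positivity
  have he1 : ((d:ℝ) - 1) * e = 1 := by
    rw [hedef, mul_one_div, div_self hd1.ne']
  obtain ⟨p0, hp0⟩ := hJne
  have hW0 : 0 ≤ W := by
    rw [← hW p0 hp0]
    exact Finset.prod_nonneg fun ℓ hℓ => by
      simp only [Finset.mem_filter] at hℓ
      exact hb p0 hp0 ℓ hℓ.1 hℓ.2
  have hNW : 1 / F ≤ N * W := by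
    calc 1 / F ≤ ∑ p ∈ J, ∏ ℓ ∈ L.filter (fun ℓ => Inc p ℓ), b p ℓ := hlow
    _ = ∑ p ∈ J, W := Finset.sum_congr rfl hW
    _ = N * W := by rw [Finset.sum_const, nsmul_eq_mul]
  have hAMGM : ∀ p ∈ J, (d:ℝ) * W ^ ((1:ℝ)/d) ≤ ∑ ℓ ∈ L.filter (fun ℓ => Inc p ℓ), b p ℓ := by
    intro p hp
    have hbnn : ∀ ℓ ∈ L.filter (fun ℓ => Inc p ℓ), 0 ≤ b p ℓ := fun ℓ hℓ => by
      simp only [Finset.mem_filter] at hℓ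
      exact hb p hp ℓ hℓ.1 hℓ.2
    have key := Real.geom_mean_le_arith_mean_weighted (L.filter (fun ℓ => Inc p ℓ))
      (fun _ => (1:ℝ)/d) (b p) (fun _ _ => by positivity)
      (by rw [Finset.sum_const, hreg p hp, nsmul_eq_mul]; field_simp) hbnn
    rw [Real.finset_prod_rpow _ _ hbnn, hW p hp] at key
    calc (d:ℝ) * W ^ ((1:ℝ)/d)
        ≤ (d:ℝ) * ∑ ℓ ∈ L.filter (fun ℓ => Inc p ℓ), ((1:ℝ)/d) * b p ℓ :=
          mul_le_mul_of_nonneg_left key (le_of_lt hd0)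
      _ = ∑ ℓ ∈ L.filter (fun ℓ => Inc p ℓ), b p ℓ := by
          rw [Finset.mul_sum]
          exact Finset.sum_congr rfl fun ℓ _ => by field_simp
  have hswap : ∑ p ∈ J, ∑ ℓ ∈ L.filter (fun ℓ => Inc p ℓ), b p ℓ = M := by
    have h1 : ∀ p, ∑ ℓ ∈ L.filter (fun ℓ => Inc p ℓ), b p ℓ
        = ∑ ℓ ∈ L, if Inc p ℓ then b p ℓ else 0 := fun p => (Finset.sum_filter _ _)
    simp_rw [h1]
    rw [Finset.sum_comm]
    have h2 : ∀ ℓ ∈ L, ∑ p ∈ J, (if Inc p ℓ then b p ℓ else 0) = 1 := by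
      intro ℓ hℓ
      rw [← Finset.sum_filter]
      exact hline ℓ hℓ
    rw [Finset.sum_congr rfl h2, Finset.sum_const, nsmul_eq_mul, mul_one]
  have hDN : (d:ℝ) * N * W ^ ((1:ℝ)/d) ≤ M := by
    calc (d:ℝ) * N * W ^ ((1:ℝ)/d) = ∑ _p ∈ J, (d:ℝ) * W ^ ((1:ℝ)/d) := by
          rw [Finset.sum_const, nsmul_eq_mul]; ring
      _ ≤ ∑ p ∈ J, ∑ ℓ ∈ L.filter (fun ℓ => Inc p ℓ), b p ℓ := Finset.sum_le_sum hAMGM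
      _ = M := hswap
  have hpow : (d:ℝ)^d * N^d * W ≤ M^d := by
    have h1 : ((d:ℝ) * N * W ^ ((1:ℝ)/d))^d ≤ M^d :=
      pow_le_pow_left₀ (by positivity) hDN d
    have h2 : (W ^ ((1:ℝ)/d))^d = W := by
      rw [← Real.rpow_natCast (W ^ ((1:ℝ)/d)) d, ← Real.rpow_mul hW0,
        one_div, inv_mul_cancel₀ (ne_of_gt hd0), Real.rpow_one]
    calc (d:ℝ)^d * N^d * W = ((d:ℝ) * N * W ^ ((1:ℝ)/d))^d := by
          rw [mul_pow, mul_pow, h2]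
      _ ≤ M^d := h1
  have hkey : (d:ℝ)^d * N^(d-1) ≤ F * M^d := by
    have hWlb : 1/(F*N) ≤ W := by
      rw [div_le_iff₀ (by positivity)]
      have h := (div_le_iff₀ hF).mp hNW
      nlinarith
    have hNd : N^d = N^(d-1) * N := by
      rw [← pow_succ]
      congr 1
      omega
    have h3 : (d:ℝ)^d * N^(d-1) / F ≤ M^d := by
      calc (d:ℝ)^d * N^(d-1) / F = (d:ℝ)^d * N^d * (1/(F*N)) := by
            rw [hNd]; field_simp
        _ ≤ (d:ℝ)^d * N^d * W := mul_le_mul_of_nonneg_left hWlb (by positivity)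
        _ ≤ M^d := hpow
    rw [div_le_iff₀ hF] at h3
    linarith
  -- take (d-1)-th roots
  have hNle : N ≤ (F * M^d / (d:ℝ)^d) ^ e := by
    have h1 : N^(d-1) ≤ F * M^d / (d:ℝ)^d := by
      rw [le_div_iff₀ (by positivity)]
      nlinarith [hkey, pow_pos hd0 d, pow_pos hN (d-1)]
    have hcast : ((d-1:ℕ):ℝ) = (d:ℝ) - 1 := by
      have h1d : 1 ≤ d := by omega
      push_cast [h1d]
      ring
    have h2 : ((N^(d-1) : ℝ)) ^ e = N := by
      rw [← Real.rpow_natCast N (d-1), ← Real.rpow_mul hN.le, hcast, he1, Real.rpow_one]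
    calc N = ((N^(d-1):ℝ))^e := h2.symm
      _ ≤ (F * M^d / (d:ℝ)^d) ^ e := Real.rpow_le_rpow (by positivity) h1 he.le
  have hF' : F = (d:ℝ) * G := by
    rw [hFdef, hGdef, ← Nat.mul_factorial_pred (show d ≠ 0 by omega)]
    push_cast
    ring
  have hde : (d:ℝ) * e = 1 + e := by
    have : (d:ℝ) * e = ((d:ℝ) - 1) * e + e := by ring
    rw [this, he1]
  calc N ≤ (F * M^d / (d:ℝ)^d) ^ e := hNle
    _ = (d:ℝ)^e * G^e * M^((d:ℝ)*e) / (d:ℝ)^((d:ℝ)*e) := by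
        rw [hF', Real.div_rpow (by positivity) (by positivity),
          Real.mul_rpow (by positivity) (by positivity),
          Real.mul_rpow hd0.le hG.le,
          ← Real.rpow_natCast M d, ← Real.rpow_mul hM0,
          ← Real.rpow_natCast (d:ℝ) d, ← Real.rpow_mul hd0.le]
    _ = G^e/(d:ℝ) * M^((d:ℝ)*e) := by
        have hdd : (d:ℝ)^((d:ℝ)*e) = (d:ℝ) * (d:ℝ)^e := by
          rw [hde, Real.rpow_add hd0, Real.rpow_one]
        rw [hdd]
        have hpe : (0:ℝ) < (d:ℝ)^e := Real.rpow_pos_of_pos hd0 e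
        field_simp
    _ = G^e/(d:ℝ) * M^((d:ℝ)/((d:ℝ)-1)) := by
        rw [hedef, mul_one_div]
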